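/- Let R = k[[x,y,z]] over a field k and I_n = (z^{n^4} - z^n x^n, y^n - z^n x, x^{n+1} - x z^{n^4-n} + y z^n) for fixed n ≥ 1. Then x^{2n+1}, y^{2n+1}, and z^{n^4+2n} all belong to I_n. -/
import Mathlib

open MvPowerSeries in
/-- `x^{2n+1}, y^{2n+1}, z^{n⁴+2n} ∈ Iₙ`. -/
theorem stmt_3 {k : Type*} [Field k] (n : ℕ) (hn : 1 ≤ n)
    (x y z : MvPowerSeries (Fin 3) k)
    (hx : x = X 0) (hy : y = X 1) (hz : z = X 2)
    (I : Ideal (MvPowerSeries (Fin 3) k))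
    (hI : I = Ideal.span {z ^ (n ^ 4) - z ^ n * x ^ n, y ^ n - z ^ n * x,
      x ^ (n + 1) - x * z ^ (n ^ 4 - n) + y * z ^ n}) :
    x ^ (2 * n + 1) ∈ I ∧ y ^ (2 * n + 1) ∈ I ∧ z ^ (n ^ 4 + 2 * n) ∈ I := by
  have ha : z ^ (n ^ 4) - z ^ n * x ^ n ∈ I := by
    rw [hI]; exact Ideal.subset_span (by simp)
  have hb : y ^ n - z ^ n * x ∈ I := by
    rw [hI]; exact Ideal.subset_span (by simp)
  have hc : x ^ (n + 1) - x * z ^ (n ^ 4 - n) + y * z ^ n ∈ I := by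
    rw [hI]; exact Ideal.subset_span (by simp)
  rcases eq_or_lt_of_le hn with h1 | h2
  · -- n = 1 case
    subst hx hy hz
    obtain rfl : n = 1 := h1.symm
    norm_num at ha hb hc
    have hu : IsUnit (1 - X (0 : Fin 3) : MvPowerSeries (Fin 3) k) := by
      rw [MvPowerSeries.isUnit_iff_constantCoeff]
      simp
    obtain ⟨w, hw⟩ := hu
    have hzI : (X (2 : Fin 3) : MvPowerSeries (Fin 3) k) ∈ I := by
      have : (X (2 : Fin 3) : MvPowerSeries (Fin 3) k)
          = (X 2 - X 2 * X 0) * (↑w⁻¹ : MvPowerSeries (Fin 3) k) := by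
        have h1 : (X 2 - X 2 * X 0 : MvPowerSeries (Fin 3) k) = X 2 * (1 - X 0) := by ring
        rw [h1, ← hw, mul_assoc, Units.mul_inv, mul_one]
      rw [this]
      exact Ideal.mul_mem_right _ _ ha
    have hyI : (X (1 : Fin 3) : MvPowerSeries (Fin 3) k) ∈ I := by
      have : (X (1 : Fin 3) : MvPowerSeries (Fin 3) k)
          = (X 1 - X 2 * X 0) + X 2 * X 0 := by ring
      rw [this]
      exact Ideal.add_mem _ hb (Ideal.mul_mem_right _ _ hzI)
    have hxI : (X (0 : Fin 3) : MvPowerSeries (Fin 3) k) ∈ I := by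
      have hm : (X 0 * (1 - X 0) : MvPowerSeries (Fin 3) k) ∈ I := by
        have : (X 0 * (1 - X 0) : MvPowerSeries (Fin 3) k)
            = X 1 * X 2 - (X 0 ^ 2 - X 0 + X 1 * X 2) := by ring
        rw [this]
        exact Ideal.sub_mem _ (Ideal.mul_mem_right _ _ hyI) hc
      have : (X (0 : Fin 3) : MvPowerSeries (Fin 3) k)
          = (X 0 * (1 - X 0)) * (↑w⁻¹ : MvPowerSeries (Fin 3) k) := by
        rw [← hw, mul_assoc, Units.mul_inv, mul_one]
      rw [this]
      exact Ideal.mul_mem_right _ _ hm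
    refine ⟨?_, ?_, ?_⟩
    · exact Ideal.pow_mem_of_mem _ hxI _ (by norm_num)
    · exact Ideal.pow_mem_of_mem _ hyI _ (by norm_num)
    · exact Ideal.pow_mem_of_mem _ hzI _ (by norm_num)
  · -- n ≥ 2 case
    obtain ⟨m, rfl⟩ : ∃ m, n = m + 1 := ⟨n - 1, by omega⟩
    set n := m + 1 with hn'
    obtain ⟨M, hM⟩ : ∃ M, n ^ 4 = M + 4 * n := by
      refine ⟨n ^ 4 - 4 * n, ?_⟩
      have h4 : 2 ≤ m + 1 := by omega
      have h8 : 8 ≤ (m + 1) ^ 3 := by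
        calc (8 : ℕ) = 2 ^ 3 := rfl
          _ ≤ (m + 1) ^ 3 := Nat.pow_le_pow_left h4 3
      have : 4 * n ≤ n ^ 4 := by
        rw [hn']
        calc 4 * (m + 1) ≤ (m + 1) ^ 3 * (m + 1) := Nat.mul_le_mul_right _ (by omega)
          _ = (m + 1) ^ 4 := by ring
      omega
    have hM' : n ^ 4 - n = M + 3 * n := by omega
    rw [hM'] at hc
    rw [hM] at ha
    -- key memberships
    have H1 : y * z ^ (2 * n) ∈ I := by
      have e : y * z ^ (2 * n) = z ^ n * (x ^ (n + 1) - x * z ^ (M + 3 * n) + y * z ^ n)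
          + x * (z ^ (M + 4 * n) - z ^ n * x ^ n) := by ring
      rw [e]
      exact Ideal.add_mem _ (Ideal.mul_mem_left _ _ hc) (Ideal.mul_mem_left _ _ ha)
    have H2 : x * z ^ (3 * n) ∈ I := by
      have e : x * z ^ (3 * n) = y ^ m * (y * z ^ (2 * n)) - z ^ (2 * n) * (y ^ n - z ^ n * x) := by
        rw [hn']; ring
      rw [e]
      exact Ideal.sub_mem _ (Ideal.mul_mem_left _ _ H1) (Ideal.mul_mem_left _ _ hb)
    refine ⟨?_, ?_, ?_⟩
    · have e : x ^ (2 * n + 1) = x ^ n * (x ^ (n + 1) - x * z ^ (M + 3 * n) + y * z ^ n)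
          + z ^ (M + 3 * n) * (x ^ (n + 1) - x * z ^ (M + 3 * n) + y * z ^ n)
          + z ^ (2 * M + 3 * n) * (x * z ^ (3 * n))
          - (2 * z ^ (M + 2 * n)) * (y * z ^ (2 * n))
          + y * (z ^ (M + 4 * n) - z ^ n * x ^ n) := by ring
      rw [e]
      exact Ideal.add_mem _ (Ideal.sub_mem _
        (Ideal.add_mem _ (Ideal.add_mem _ (Ideal.mul_mem_left _ _ hc)
          (Ideal.mul_mem_left _ _ hc)) (Ideal.mul_mem_left _ _ H2))
        (Ideal.mul_mem_left _ _ H1)) (Ideal.mul_mem_left _ _ ha)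
    · have e : y ^ (2 * n + 1) = (y * (y ^ n - z ^ n * x) + 2 * (y * z ^ n * x)) * (y ^ n - z ^ n * x)
          + x ^ 2 * (y * z ^ (2 * n)) := by ring
      rw [e]
      exact Ideal.add_mem _ (Ideal.mul_mem_left _ _ hb) (Ideal.mul_mem_left _ _ H1)
    · rw [hM]
      have e : z ^ (M + 4 * n + 2 * n) = z ^ (2 * n) * (z ^ (M + 4 * n) - z ^ n * x ^ n)
          + x ^ m * (x * z ^ (3 * n)) := by
        rw [hn']; ring
      rw [e]
      exact Ideal.add_mem _ (Ideal.mul_mem_left _ _ ha) (Ideal.mul_mem_left _ _ H2)
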